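/- Let G = (V,E) be a finite graph with maximum degree D, and Θ a nonempty family of nonconstant paths such that each path in Θ contains a simple subpath in Θ; let Θ̂ be the corresponding vertex sets of the simple paths. Then there exists C = C(p,D) ≥ 1 such that C⁻¹·Mod_p(Θ,G) ≤ Mod_p^V(Θ̂,G) ≤ C·Mod_p(Θ,G), where Mod_p is the edge modulus and Mod_p^V the vertex modulus. -/

import Mathlib

open Classical Real

noncomputable section

namespace Paper

variable {V : Type*} [Fintype V] [DecidableEq V]

/-- A path in a graph `G`, packaged together with its endpoints. -/
def GPath (G : SimpleGraph V) : Type _ := Σ u v : V, G.Walk u v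

/-- The `ρ`-length of a path: the sum of `ρ` over its edges. -/
def lenρ (G : SimpleGraph V) (ρ : Sym2 V → ℝ) (θ : GPath G) : ℝ :=
  (θ.2.2.edges.map ρ).sum

/-- A density on a graph: nonnegative and supported on the edge set. -/
def IsDensity (G : SimpleGraph V) (ρ : Sym2 V → ℝ) : Prop :=
  (∀ e, 0 ≤ ρ e) ∧ ∀ e, e ∉ G.edgeSet → ρ e = 0

/-- `ρ` is admissible for the path family `Θ`. -/
def Admissible (G : SimpleGraph V) (Θ : Set (GPath G)) (ρ : Sym2 V → ℝ) : Prop :=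
  (∀ e, 0 ≤ ρ e) ∧ ∀ θ ∈ Θ, 1 ≤ lenρ G ρ θ

/-- The `p`-mass of a density: `∑_{e ∈ E} ρ(e)^p`. -/
def massE (G : SimpleGraph V) (p : ℝ) (ρ : Sym2 V → ℝ) : ℝ :=
  ∑ e : Sym2 V, if e ∈ G.edgeSet then ρ e ^ p else 0

/-- The edge `p`-modulus of a family of paths. -/
def ModE (G : SimpleGraph V) (p : ℝ) (Θ : Set (GPath G)) : ℝ :=
  sInf {m | ∃ ρ, Admissible G Θ ρ ∧ massE G p ρ = m}

/-- The optimal admissible density for a path family. -/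
def IsOptDensityE (G : SimpleGraph V) (p : ℝ) (Θ : Set (GPath G)) (ρ : Sym2 V → ℝ) : Prop :=
  IsDensity G ρ ∧ Admissible G Θ ρ ∧
    ∀ σ, IsDensity G σ → Admissible G Θ σ → massE G p ρ ≤ massE G p σ

/-- The family `Θ(A,B)` of paths connecting `A` to `B`. -/
def pathsBetween (G : SimpleGraph V) (A B : Set V) : Set (GPath G) :=
  {θ | θ.1 ∈ A ∧ θ.2.1 ∈ B}

/-- Vertex `p`-modulus of a family of vertex sets. -/
def ModV (p : ℝ) (Θh : Set (Finset V)) : ℝ :=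
  sInf {m | ∃ ρ : V → ℝ, (∀ v, 0 ≤ ρ v) ∧ (∀ s ∈ Θh, 1 ≤ ∑ v ∈ s, ρ v) ∧
    (∑ v : V, ρ v ^ p) = m}

/-- Maximum degree of a graph. -/
def maxDeg (G : SimpleGraph V) : ℕ :=
  Finset.univ.sup fun v : V => Nat.card {u // G.Adj v u}

/-- `|U(x) − U(y)|` as a function on unordered pairs. -/
def ediff (U : V → ℝ) : Sym2 V → ℝ :=
  Sym2.lift ⟨fun x y => |U x - U y|, fun x y => abs_sub_comm (U x) (U y)⟩

/-- The `p`-energy `∑_{{x,y}∈E} |U(x)−U(y)|^p` of a potential. -/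
def capMass (G : SimpleGraph V) (p : ℝ) (U : V → ℝ) : ℝ :=
  ∑ e : Sym2 V, if e ∈ G.edgeSet then ediff U e ^ p else 0

/-- The `p`-capacity from `A` to `B`. -/
def CapE (G : SimpleGraph V) (p : ℝ) (A B : Finset V) : ℝ :=
  sInf {m | ∃ U : V → ℝ, (∀ a ∈ A, U a = 0) ∧ (∀ b ∈ B, U b = 1) ∧ capMass G p U = m}

/-- `U` is `p`-harmonic in `A`. -/
def pHarmOn (G : SimpleGraph V) (p : ℝ) (U : V → ℝ) (A : Set V) : Prop :=
  ∀ x ∈ A, (∑ y : V,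
    if G.Adj x y then Real.sign (U x - U y) * |U x - U y| ^ (p - 1) else 0) = 0

/-- The (outer) vertex boundary of `A`. -/
def vBoundary (G : SimpleGraph V) (A : Set V) : Set V :=
  {x | x ∉ A ∧ ∃ y ∈ A, G.Adj x y}

/-- A flow from `A` to `B`: antisymmetric, supported on edges, divergence free off `A ∪ B`. -/
def IsFlow (G : SimpleGraph V) (A B : Finset V) (F : V → V → ℝ) : Prop :=
  (∀ x y, F x y = - F y x) ∧ (∀ x y, ¬ G.Adj x y → F x y = 0) ∧
  (∀ x, x ∉ A → x ∉ B → (∑ y : V, F x y) = 0)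

/-- The total flow out of `A`. -/
def totalFlow (A : Finset V) (F : V → V → ℝ) : ℝ := ∑ x ∈ A, ∑ y : V, F x y

/-- `|F(e)|` as a function on unordered pairs. -/
def flowAbs (F : V → V → ℝ) : Sym2 V → ℝ :=
  Sym2.lift ⟨fun x y => |F x y| ⊔ |F y x|, fun x y => sup_comm _ _⟩

/-- The `q`-energy of a flow. -/
def energyQ (G : SimpleGraph V) (q : ℝ) (F : V → V → ℝ) : ℝ :=
  ∑ e : Sym2 V, if e ∈ G.edgeSet then flowAbs F e ^ q else 0

/-- The minimal `q`-energy among unit flows from `A` to `B`. -/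
def EminQ (G : SimpleGraph V) (q : ℝ) (A B : Finset V) : ℝ :=
  sInf {m | ∃ F, IsFlow G A B F ∧ totalFlow A F = 1 ∧ energyQ G q F = m}

end Paper


namespace StatementAux

open Finset

variable {V : Type} [Fintype V] [DecidableEq V]

/-- Sum of a vertex function over the two endpoints of an unordered pair. -/
def vsum (h : V → ℝ) : Sym2 V → ℝ :=
  Sym2.lift ⟨fun x y => h x + h y, fun x y => add_comm _ _⟩

lemma vsum_mk (h : V → ℝ) (a b : V) : vsum h s(a, b) = h a + h b := rfl

lemma vsum_nonneg {h : V → ℝ} (hh : ∀ v, 0 ≤ h v) (e : Sym2 V) : 0 ≤ vsum h e := by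
  induction e using Sym2.ind with
  | _ a b => exact add_nonneg (hh a) (hh b)

lemma filter_mem_pair (a b : V) (hab : a ≠ b) :
    (Finset.univ.filter (fun v => v ∈ (s(a, b) : Sym2 V))) = {a, b} := by
  ext v; simp [Sym2.mem_iff]

lemma swap_sum (s : Finset V) (T : Finset (Sym2 V)) (F : V → Sym2 V → ℝ) :
    ∑ v ∈ s, ∑ e ∈ T.filter (fun e => v ∈ e), F v e
      = ∑ e ∈ T, ∑ v ∈ s.filter (fun v => v ∈ e), F v e := by
  simp only [Finset.sum_filter]
  exact Finset.sum_comm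

lemma card_filter_inc (G : SimpleGraph V) (v : V) :
    (G.edgeFinset.filter (fun e => v ∈ e)).card = G.degree v := by
  rw [← SimpleGraph.card_incidenceFinset_eq_degree, SimpleGraph.incidenceFinset_eq_filter]

lemma degree_le_of_maxDeg {G : SimpleGraph V} {D : ℕ} (hD : Paper.maxDeg G ≤ D) (v : V) :
    G.degree v ≤ D := by
  refine le_trans ?_ (le_trans (Finset.le_sup (f := fun v : V => Nat.card {u // G.Adj v u})
    (Finset.mem_univ v)) hD)
  show G.degree v ≤ Nat.card {u // G.Adj v u}
  rw [Nat.card_eq_fintype_card, Fintype.card_subtype, SimpleGraph.degree,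
    SimpleGraph.neighborFinset_eq_filter]

lemma sum_ite_edgeSet (G : SimpleGraph V) (f : Sym2 V → ℝ) :
    (∑ e : Sym2 V, if e ∈ G.edgeSet then f e else 0) = ∑ e ∈ G.edgeFinset, f e := by
  rw [← Finset.sum_filter]
  congr 1
  ext e
  simp [SimpleGraph.mem_edgeFinset]

lemma massE_eq (G : SimpleGraph V) (p : ℝ) (ρ : Sym2 V → ℝ) :
    Paper.massE G p ρ = ∑ e ∈ G.edgeFinset, ρ e ^ p :=
  sum_ite_edgeSet G fun e => ρ e ^ p

lemma sum_inc (G : SimpleGraph V) (f : Sym2 V → ℝ) :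
    ∑ v : V, ∑ e ∈ G.edgeFinset.filter (fun e => v ∈ e), f e
      = ∑ e ∈ G.edgeFinset, 2 * f e := by
  rw [swap_sum]
  refine Finset.sum_congr rfl fun e he => ?_
  rw [Finset.sum_const, nsmul_eq_mul]
  congr 1
  revert he
  induction e using Sym2.ind with
  | _ a b =>
    intro he
    have hab : a ≠ b := by
      have := G.not_isDiag_of_mem_edgeSet (SimpleGraph.mem_edgeFinset.1 he)
      simpa using this
    rw [filter_mem_pair a b hab, Finset.card_insert_of_notMem (by simpa using hab),
      Finset.card_singleton]
    norm_num

lemma sum_endpoints (G : SimpleGraph V) (h : V → ℝ) :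
    ∑ e ∈ G.edgeFinset, vsum h e = ∑ v : V, (G.degree v : ℝ) * h v := by
  have step : ∑ e ∈ G.edgeFinset, vsum h e
      = ∑ e ∈ G.edgeFinset, ∑ v ∈ Finset.univ.filter (fun v => v ∈ e), h v := by
    refine Finset.sum_congr rfl fun e he => ?_
    revert he
    induction e using Sym2.ind with
    | _ a b =>
      intro he
      have hab : a ≠ b := by
        have := G.not_isDiag_of_mem_edgeSet (SimpleGraph.mem_edgeFinset.1 he)
        simpa using this
      rw [filter_mem_pair a b hab, Finset.sum_insert (by simpa using hab),
        Finset.sum_singleton]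
      rfl
  rw [step, ← swap_sum]
  refine Finset.sum_congr rfl fun v _ => ?_
  rw [Finset.sum_const, nsmul_eq_mul, card_filter_inc]

lemma support_sum_le_aux {G : SimpleGraph V} (h : V → ℝ) (hh : ∀ v, 0 ≤ h v) :
    ∀ {u v : V} (w : G.Walk u v),
      (w.support.map h).sum ≤ h u + (w.edges.map (vsum h)).sum := by
  intro u v w
  induction w with
  | nil => simp
  | @cons a b c adj w ih =>
    simp only [SimpleGraph.Walk.support_cons, SimpleGraph.Walk.edges_cons, List.map_cons,
      List.sum_cons]
    have hv : vsum h s(a, b) = h a + h b := rfl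
    have := hh b
    have := hh a
    linarith

lemma support_sum_le {G : SimpleGraph V} (h : V → ℝ) (hh : ∀ v, 0 ≤ h v)
    {u v : V} (w : G.Walk u v) (hw : w.length ≠ 0) :
    (w.support.map h).sum ≤ (w.edges.map (vsum h)).sum := by
  cases w with
  | nil => simp at hw
  | @cons u b v adj w =>
    simp only [SimpleGraph.Walk.support_cons, SimpleGraph.Walk.edges_cons, List.map_cons,
      List.sum_cons]
    have hv : vsum h s(u, b) = h u + h b := rfl
    have := support_sum_le_aux h hh w
    linarith

lemma toFinset_sum_le {α : Type*} [DecidableEq α] (g : α → ℝ) (hg : ∀ a, 0 ≤ g a) (l : List α) :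
    ∑ e ∈ l.toFinset, g e ≤ (l.map g).sum := by
  induction l with
  | nil => simp
  | cons a l ih =>
    simp only [List.toFinset_cons, List.map_cons, List.sum_cons]
    by_cases hmem : a ∈ l.toFinset
    · rw [Finset.insert_eq_self.2 hmem]; linarith [hg a]
    · rw [Finset.sum_insert hmem]; linarith

lemma two_rpow_bound {p : ℝ} (hp : 1 ≤ p) {a b : ℝ} (ha : 0 ≤ a) (hb : 0 ≤ b) :
    (a + b) ^ p ≤ 2 ^ (p - 1) * (a ^ p + b ^ p) := by
  classical
  have h2 : ((1 : ℕ) : ℝ) ≠ ((2 : ℕ) : ℝ) := by norm_num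
  have hab : (1 : ℕ) ≠ (2 : ℕ) := by norm_num
  have := Real.rpow_sum_le_const_mul_sum_rpow_of_nonneg ({1, 2} : Finset ℕ)
    (f := fun i => if i = 1 then a else b) hp (by
      intro i _; split <;> assumption)
  simpa [Finset.sum_insert, hab] using this


lemma key1 {G : SimpleGraph V} {D : ℕ} {p : ℝ} (hp : 1 ≤ p) (hD : Paper.maxDeg G ≤ D)
    (Θ : Set (Paper.GPath G)) {σ : Sym2 V → ℝ} (hσ0 : ∀ e, 0 ≤ σ e)
    (hσadm : ∀ θ ∈ Θ, 1 ≤ Paper.lenρ G σ θ) :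
    ∃ ρV : V → ℝ, (∀ v, 0 ≤ ρV v) ∧
      (∀ s : Finset V, (∃ θ ∈ Θ, θ.2.2.IsPath ∧ s = θ.2.2.support.toFinset) →
        1 ≤ ∑ v ∈ s, ρV v) ∧
      (∑ v : V, ρV v ^ p) ≤ 2 * (D : ℝ) ^ (p - 1) * Paper.massE G p σ := by
  classical
  refine ⟨fun v => ∑ e ∈ G.edgeFinset.filter (fun e => v ∈ e), σ e,
    fun v => Finset.sum_nonneg fun e _ => hσ0 e, ?_, ?_⟩
  · rintro s ⟨θ', hθ', hpath, rfl⟩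
    set T : Finset (Sym2 V) := θ'.2.2.edges.toFinset with hT
    set S : Finset V := θ'.2.2.support.toFinset with hS
    have h0 : (1 : ℝ) ≤ ∑ e ∈ T, σ e := by
      have h := hσadm θ' hθ'
      rw [List.sum_toFinset σ hpath.isTrail.edges_nodup]
      exact h
    refine le_trans h0 ?_
    calc ∑ e ∈ T, σ e
        ≤ ∑ e ∈ T, ((S.filter (fun v => v ∈ e)).card : ℝ) * σ e := by
          refine Finset.sum_le_sum fun e he => ?_
          have hne : (S.filter (fun v => v ∈ e)).Nonempty := by
            have heedge : e ∈ θ'.2.2.edges := List.mem_toFinset.1 he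
            revert heedge
            induction e using Sym2.ind with
            | _ a b =>
              intro heedge
              exact ⟨a, Finset.mem_filter.2 ⟨List.mem_toFinset.2
                (θ'.2.2.fst_mem_support_of_mem_edges heedge), by simp⟩⟩
          have hcard : (1 : ℝ) ≤ ((S.filter (fun v => v ∈ e)).card : ℝ) := by
            exact_mod_cast Nat.one_le_iff_ne_zero.2 (Finset.card_ne_zero.2 hne)
          exact le_mul_of_one_le_left (hσ0 e) hcard
      _ = ∑ e ∈ T, ∑ v ∈ S.filter (fun v => v ∈ e), σ e := by
          refine Finset.sum_congr rfl fun e _ => ?_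
          rw [Finset.sum_const, nsmul_eq_mul]
      _ = ∑ v ∈ S, ∑ e ∈ T.filter (fun e => v ∈ e), σ e :=
          (swap_sum S T fun _ e => σ e).symm
      _ ≤ ∑ v ∈ S, ∑ e ∈ G.edgeFinset.filter (fun e => v ∈ e), σ e := by
          refine Finset.sum_le_sum fun v _ =>
            Finset.sum_le_sum_of_subset_of_nonneg ?_ fun e _ _ => hσ0 e
          refine Finset.filter_subset_filter _ fun e he' => ?_
          exact SimpleGraph.mem_edgeFinset.2
            (θ'.2.2.edges_subset_edgeSet (List.mem_toFinset.1 he'))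
  · have h1 : ∀ v : V, (∑ e ∈ G.edgeFinset.filter (fun e => v ∈ e), σ e) ^ p
        ≤ (D : ℝ) ^ (p - 1) * ∑ e ∈ G.edgeFinset.filter (fun e => v ∈ e), σ e ^ p := by
      intro v
      refine le_trans
        (Real.rpow_sum_le_const_mul_sum_rpow_of_nonneg _ hp fun e _ => hσ0 e) ?_
      have hcard : ((G.edgeFinset.filter (fun e => v ∈ e)).card : ℝ) ≤ (D : ℝ) := by
        exact_mod_cast (card_filter_inc G v ▸ degree_le_of_maxDeg hD v)
      exact mul_le_mul_of_nonneg_right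
        (Real.rpow_le_rpow (Nat.cast_nonneg _) hcard (by linarith))
        (Finset.sum_nonneg fun e _ => Real.rpow_nonneg (hσ0 e) p)
    calc ∑ v : V, (∑ e ∈ G.edgeFinset.filter (fun e => v ∈ e), σ e) ^ p
        ≤ ∑ v : V, (D : ℝ) ^ (p - 1) * ∑ e ∈ G.edgeFinset.filter (fun e => v ∈ e), σ e ^ p :=
          Finset.sum_le_sum fun v _ => h1 v
      _ = (D : ℝ) ^ (p - 1) * ∑ v : V, ∑ e ∈ G.edgeFinset.filter (fun e => v ∈ e), σ e ^ p := by
          rw [← Finset.mul_sum]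
      _ = (D : ℝ) ^ (p - 1) * ∑ e ∈ G.edgeFinset, 2 * σ e ^ p := by
          rw [sum_inc]
      _ = 2 * (D : ℝ) ^ (p - 1) * Paper.massE G p σ := by
          rw [massE_eq, ← Finset.mul_sum]; ring

lemma key2 {G : SimpleGraph V} {D : ℕ} {p : ℝ} (hp : 1 ≤ p) (hD : Paper.maxDeg G ≤ D)
    (Θ : Set (Paper.GPath G)) (hlen : ∀ θ ∈ Θ, θ.2.2.length ≠ 0)
    (hsub : ∀ θ ∈ Θ, ∃ θ' ∈ Θ, θ'.2.2.IsPath ∧ θ'.2.2.edges ⊆ θ.2.2.edges)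
    {ρV : V → ℝ} (h0 : ∀ v, 0 ≤ ρV v)
    (hadm : ∀ s : Finset V, (∃ θ ∈ Θ, θ.2.2.IsPath ∧ s = θ.2.2.support.toFinset) →
      1 ≤ ∑ v ∈ s, ρV v) :
    ∃ ρ : Sym2 V → ℝ, Paper.Admissible G Θ ρ ∧
      Paper.massE G p ρ ≤ 2 ^ (p - 1) * (D : ℝ) * ∑ v : V, ρV v ^ p := by
  classical
  set ρ : Sym2 V → ℝ := fun e => if e ∈ G.edgeSet then vsum ρV e else 0 with hρ
  have hρ0 : ∀ e, 0 ≤ ρ e := by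
    intro e
    rw [hρ]
    dsimp only
    split
    · exact vsum_nonneg h0 _
    · exact le_refl 0
  refine ⟨ρ, ⟨hρ0, ?_⟩, ?_⟩
  · intro θ hθ
    obtain ⟨θ', hθ'Θ, hpath, hsubE⟩ := hsub θ hθ
    have hlen' := hlen θ' hθ'Θ
    have h1 : (1 : ℝ) ≤ (θ'.2.2.support.map ρV).sum := by
      rw [← List.sum_toFinset ρV hpath.support_nodup]
      exact hadm _ ⟨θ', hθ'Θ, hpath, rfl⟩
    have h2 := support_sum_le ρV h0 θ'.2.2 hlen'
    have h3 : (θ'.2.2.edges.map (vsum ρV)).sum = (θ'.2.2.edges.map ρ).sum := by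
      congr 1
      refine List.map_congr_left fun e he => ?_
      rw [hρ]
      dsimp only
      rw [if_pos (θ'.2.2.edges_subset_edgeSet he)]
    have h4 : (θ'.2.2.edges.map ρ).sum = ∑ e ∈ θ'.2.2.edges.toFinset, ρ e :=
      (List.sum_toFinset ρ hpath.isTrail.edges_nodup).symm
    have h5 : ∑ e ∈ θ'.2.2.edges.toFinset, ρ e ≤ ∑ e ∈ θ.2.2.edges.toFinset, ρ e := by
      refine Finset.sum_le_sum_of_subset_of_nonneg ?_ fun e _ _ => hρ0 e
      intro e he
      exact List.mem_toFinset.2 (hsubE (List.mem_toFinset.1 he))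
    have h6 : ∑ e ∈ θ.2.2.edges.toFinset, ρ e ≤ (θ.2.2.edges.map ρ).sum :=
      toFinset_sum_le ρ hρ0 _
    show (1 : ℝ) ≤ (θ.2.2.edges.map ρ).sum
    linarith
  · rw [massE_eq]
    have hbound : ∀ e ∈ G.edgeFinset, ρ e ^ p ≤ 2 ^ (p - 1) * vsum (fun v => ρV v ^ p) e := by
      intro e he
      have hmem := SimpleGraph.mem_edgeFinset.1 he
      revert hmem
      induction e using Sym2.ind with
      | _ a b =>
        intro hmem
        have hρe : ρ s(a, b) = vsum ρV s(a, b) := by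
          rw [hρ]; dsimp only; rw [if_pos hmem]
        rw [hρe, vsum_mk, vsum_mk]
        exact two_rpow_bound hp (h0 a) (h0 b)
    calc ∑ e ∈ G.edgeFinset, ρ e ^ p
        ≤ ∑ e ∈ G.edgeFinset, 2 ^ (p - 1) * vsum (fun v => ρV v ^ p) e :=
          Finset.sum_le_sum hbound
      _ = 2 ^ (p - 1) * ∑ v : V, (G.degree v : ℝ) * ρV v ^ p := by
          rw [← Finset.mul_sum, sum_endpoints]
      _ ≤ 2 ^ (p - 1) * ∑ v : V, (D : ℝ) * ρV v ^ p := by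
          refine mul_le_mul_of_nonneg_left (Finset.sum_le_sum fun v _ => ?_)
            (Real.rpow_nonneg (by norm_num) _)
          exact mul_le_mul_of_nonneg_right
            (by exact_mod_cast degree_le_of_maxDeg hD v) (Real.rpow_nonneg (h0 v) p)
      _ = 2 ^ (p - 1) * (D : ℝ) * ∑ v : V, ρV v ^ p := by
          rw [← Finset.mul_sum]; ring

end StatementAux

open Paper in
/-- Comparability of edge modulus and vertex modulus, with a constant
depending only on `p` and the degree bound `D`: for every graph with maximum degree at
most `D` and every nonempty family `Θ` of nonconstant paths each of which contains a
simple subpath belonging to `Θ`, letting `Θ̂` be the vertex sets of the simple paths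
of `Θ`, one has `C⁻¹·Mod_p(Θ) ≤ Mod_p^V(Θ̂) ≤ C·Mod_p(Θ)`. -/
theorem statement1 (p : ℝ) (hp : 1 ≤ p) (D : ℕ) :
    ∃ C : ℝ, 1 ≤ C ∧
      ∀ (V : Type) (_ : Fintype V) (_ : DecidableEq V) (G : SimpleGraph V),
        maxDeg G ≤ D →
        ∀ Θ : Set (GPath G), Θ.Nonempty →
          (∀ θ ∈ Θ, θ.2.2.length ≠ 0) →
          (∀ θ ∈ Θ, ∃ θ' ∈ Θ, θ'.2.2.IsPath ∧ θ'.2.2.edges ⊆ θ.2.2.edges) →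
          C⁻¹ * ModE G p Θ ≤
              ModV p {s : Finset V | ∃ θ ∈ Θ, θ.2.2.IsPath ∧ s = θ.2.2.support.toFinset} ∧
            ModV p {s : Finset V | ∃ θ ∈ Θ, θ.2.2.IsPath ∧ s = θ.2.2.support.toFinset} ≤
              C * ModE G p Θ := by
  have hp0 : (0 : ℝ) < p := lt_of_lt_of_le zero_lt_one hp
  have hD0 : (0 : ℝ) ≤ (D : ℝ) := Nat.cast_nonneg D
  have h2p : (2 : ℝ) ≤ 2 ^ p := by
    calc (2 : ℝ) = 2 ^ (1 : ℝ) := (Real.rpow_one 2).symm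
      _ ≤ 2 ^ p := Real.rpow_le_rpow_of_exponent_le one_le_two hp
  have h2p' : (2 : ℝ) ^ (p - 1) ≤ 2 ^ p :=
    Real.rpow_le_rpow_of_exponent_le one_le_two (by linarith)
  have hDp : ((D : ℝ) + 1) ^ (1 : ℝ) ≤ ((D : ℝ) + 1) ^ p :=
    Real.rpow_le_rpow_of_exponent_le (by linarith) hp
  rw [Real.rpow_one] at hDp
  have hC1 : (1 : ℝ) ≤ 2 ^ p := by linarith
  have hCD : (1 : ℝ) ≤ ((D : ℝ) + 1) ^ p := by linarith
  have hC : (1 : ℝ) ≤ 2 ^ p * ((D : ℝ) + 1) ^ p := by nlinarith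
  have hCpos : (0 : ℝ) < 2 ^ p * ((D : ℝ) + 1) ^ p := lt_of_lt_of_le zero_lt_one hC
  have hc1 : 2 * (D : ℝ) ^ (p - 1) ≤ 2 ^ p * ((D : ℝ) + 1) ^ p := by
    have hd : (D : ℝ) ^ (p - 1) ≤ ((D : ℝ) + 1) ^ p := by
      calc (D : ℝ) ^ (p - 1) ≤ ((D : ℝ) + 1) ^ (p - 1) :=
          Real.rpow_le_rpow hD0 (by linarith) (by linarith)
        _ ≤ ((D : ℝ) + 1) ^ p :=
          Real.rpow_le_rpow_of_exponent_le (by linarith) (by linarith)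
    exact mul_le_mul h2p hd (Real.rpow_nonneg hD0 _) (by linarith)
  have hc2 : (2 : ℝ) ^ (p - 1) * (D : ℝ) ≤ 2 ^ p * ((D : ℝ) + 1) ^ p := by
    have hd : (D : ℝ) ≤ ((D : ℝ) + 1) ^ p := by linarith
    exact mul_le_mul h2p' hd hD0 (by linarith)
  refine ⟨2 ^ p * ((D : ℝ) + 1) ^ p, hC, ?_⟩
  intro V _ _ G hD Θ hΘne hlen hsub
  classical
  set Θh := {s : Finset V | ∃ θ ∈ Θ, θ.2.2.IsPath ∧ s = θ.2.2.support.toFinset} with hΘh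
  set SE := {m | ∃ ρ, Admissible G Θ ρ ∧ massE G p ρ = m} with hSEdef
  set SV := {m | ∃ ρ : V → ℝ, (∀ v, 0 ≤ ρ v) ∧ (∀ s ∈ Θh, 1 ≤ ∑ v ∈ s, ρ v) ∧
    (∑ v : V, ρ v ^ p) = m} with hSVdef
  have hModE : ModE G p Θ = sInf SE := rfl
  have hModV : ModV p Θh = sInf SV := rfl
  have hSEne : SE.Nonempty := by
    refine ⟨massE G p (fun _ => 1), ⟨fun _ => 1, ⟨fun _ => zero_le_one, fun θ hθ => ?_⟩, rfl⟩⟩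
    show (1 : ℝ) ≤ (θ.2.2.edges.map (fun _ => (1 : ℝ))).sum
    rw [List.map_const', List.sum_replicate, SimpleGraph.Walk.length_edges, nsmul_eq_mul,
      mul_one]
    exact_mod_cast Nat.one_le_iff_ne_zero.2 (hlen θ hθ)
  have hSVne : SV.Nonempty := by
    refine ⟨_, (fun _ => 1), fun _ => zero_le_one, fun s hs => ?_, rfl⟩
    obtain ⟨θ, hθ, hpath, rfl⟩ := hs
    rw [Finset.sum_const, nsmul_eq_mul, mul_one]
    have hne : (θ.2.2.support.toFinset).Nonempty :=
      ⟨θ.1, List.mem_toFinset.2 θ.2.2.start_mem_support⟩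
    exact_mod_cast Nat.one_le_iff_ne_zero.2 (Finset.card_ne_zero.2 hne)
  have hSE0 : ∀ m ∈ SE, (0 : ℝ) ≤ m := by
    rintro m ⟨ρ, ⟨hρ0, _⟩, rfl⟩
    refine Finset.sum_nonneg fun e _ => ?_
    split
    · exact Real.rpow_nonneg (hρ0 e) p
    · exact le_refl 0
  have hSV0 : ∀ m ∈ SV, (0 : ℝ) ≤ m := by
    rintro m ⟨ρ, hρ0, _, rfl⟩
    exact Finset.sum_nonneg fun v _ => Real.rpow_nonneg (hρ0 v) p
  have hbddE : BddBelow SE := ⟨0, fun m hm => hSE0 m hm⟩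
  have hbddV : BddBelow SV := ⟨0, fun m hm => hSV0 m hm⟩
  have stepVE : ∀ m ∈ SE, sInf SV ≤ 2 ^ p * ((D : ℝ) + 1) ^ p * m := by
    rintro m ⟨σ, ⟨hσ0, hσadm⟩, rfl⟩
    obtain ⟨ρV, h1, h2, h3⟩ := StatementAux.key1 hp hD Θ hσ0 hσadm
    have hmem : (∑ v : V, ρV v ^ p) ∈ SV := ⟨ρV, h1, fun s hs => h2 s hs, rfl⟩
    have hle : sInf SV ≤ ∑ v : V, ρV v ^ p := csInf_le hbddV hmem
    have hm0 : (0 : ℝ) ≤ massE G p σ := hSE0 _ ⟨σ, ⟨hσ0, hσadm⟩, rfl⟩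
    calc sInf SV ≤ 2 * (D : ℝ) ^ (p - 1) * massE G p σ := hle.trans h3
      _ ≤ 2 ^ p * ((D : ℝ) + 1) ^ p * massE G p σ := mul_le_mul_of_nonneg_right hc1 hm0
  have stepEV : ∀ m ∈ SV, sInf SE ≤ 2 ^ p * ((D : ℝ) + 1) ^ p * m := by
    rintro m ⟨ρV, h0, hadm, rfl⟩
    obtain ⟨ρ, hρadm, h3⟩ := StatementAux.key2 hp hD Θ hlen hsub h0 (fun s hs => hadm s hs)
    have hle : sInf SE ≤ massE G p ρ := csInf_le hbddE ⟨ρ, hρadm, rfl⟩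
    have hm0 : (0 : ℝ) ≤ ∑ v : V, ρV v ^ p :=
      Finset.sum_nonneg fun v _ => Real.rpow_nonneg (h0 v) p
    calc sInf SE ≤ 2 ^ (p - 1) * (D : ℝ) * ∑ v : V, ρV v ^ p := hle.trans h3
      _ ≤ 2 ^ p * ((D : ℝ) + 1) ^ p * ∑ v : V, ρV v ^ p :=
        mul_le_mul_of_nonneg_right hc2 hm0
  have hVE : sInf SV ≤ 2 ^ p * ((D : ℝ) + 1) ^ p * sInf SE := by
    have h := le_csInf hSEne fun m hm =>
      (div_le_iff₀ hCpos).2 (by rw [mul_comm]; exact stepVE m hm)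
    have := (div_le_iff₀ hCpos).1 h
    linarith [this]
  have hEV : sInf SE ≤ 2 ^ p * ((D : ℝ) + 1) ^ p * sInf SV := by
    have h := le_csInf hSVne fun m hm =>
      (div_le_iff₀ hCpos).2 (by rw [mul_comm]; exact stepEV m hm)
    have := (div_le_iff₀ hCpos).1 h
    linarith [this]
  constructor
  · rw [hModE, hModV, inv_mul_le_iff₀ hCpos]
    exact hEV
  · rw [hModE, hModV]
    exact hVE
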